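/- Let C be a monoidal category and F : C → C a strong monoidal functor that is an equivalence of categories, with structure isomorphisms F₂(X,Y) : F(X) ⊗ F(Y) ≅ F(X ⊗ Y). Then for every object (V, σ) of the Drinfeld center Z(C), there exists a unique half-braiding σ' on F(V) such that for every object X of C one has F₂(X, V) ∘ σ'_{F(X)} = F(σ_X) ∘ F₂(V, X) as morphisms F(V) ⊗ F(X) ⟶ F(X ⊗ V). -/

import Mathlib

/-!
Let `C` be a monoidal category and `F : C ⥤ C` a strong monoidal functor which is an
equivalence of categories.  For every object `(V, σ)` of the Drinfeld center `Z(C)`,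
there is a unique half-braiding `σ'` on `F(V)` such that
`F₂(X, V) ∘ σ'_{F(X)} = F(σ_X) ∘ F₂(V, X)` for all `X : C`.
-/

open CategoryTheory MonoidalCategory Functor.LaxMonoidal

variable {C : Type*} [Category C] [MonoidalCategory C]

@[simp] lemma Functor.asEquivalence_functor' {D : Type*} [Category D] (F : C ⥤ D)
    [F.IsEquivalence] : F.asEquivalence.functor = F := rfl

lemma HalfBraiding.ext' {X : C} {a b : HalfBraiding X} (h : a.β = b.β) : a = b := by
  cases a; cases b; cases h; rfl

/-- A purely structural conjugation lemma. -/
lemma conj_hexagon {A X X' Y Y' : C} (c : X ≅ Y) (c' : X' ≅ Y')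
    (k : A ⊗ X ⟶ X ⊗ A) (k' : A ⊗ X' ⟶ X' ⊗ A) :
    (α_ A Y Y').inv ≫ (((A ◁ c.inv) ≫ k ≫ (c.hom ▷ A)) ▷ Y') ≫ (α_ Y A Y').hom ≫
        (Y ◁ ((A ◁ c'.inv) ≫ k' ≫ (c'.hom ▷ A))) ≫ (α_ Y Y' A).inv =
      (A ◁ ((c.inv ⊗ₘ c'.inv) : Y ⊗ Y' ⟶ X ⊗ X')) ≫ (α_ A X X').inv ≫ (k ▷ X') ≫
        (α_ X A X').hom ≫ (X ◁ k') ≫ (α_ X X' A).inv ≫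
          (((c.hom ⊗ₘ c'.hom) : X ⊗ X' ⟶ Y ⊗ Y') ▷ A) := by
  simp only [comp_whiskerRight, MonoidalCategory.whiskerLeft_comp, Category.assoc]
  slice_lhs 1 2 => rw [← associator_inv_naturality_middle]
  slice_lhs 4 5 => rw [associator_naturality_left]
  slice_lhs 5 6 => rw [← whisker_exchange]
  slice_lhs 6 7 => rw [← whisker_exchange]
  slice_lhs 7 8 => rw [← whisker_exchange]
  slice_lhs 8 9 => rw [associator_inv_naturality_left]
  slice_lhs 4 5 => rw [← associator_naturality_right]
  slice_lhs 3 4 => rw [← whisker_exchange]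
  slice_lhs 2 3 => rw [← associator_inv_naturality_right]
  slice_lhs 7 8 => rw [associator_inv_naturality_middle]
  slice_lhs 1 2 => rw [← MonoidalCategory.whiskerLeft_comp, ← MonoidalCategory.tensorHom_def]
  slice_lhs 7 8 => rw [← comp_whiskerRight, ← tensorHom_def']

section aux

open Functor.OplaxMonoidal

variable (F : C ⥤ C) [F.Monoidal] [F.IsEquivalence] (V : C) (σ : HalfBraiding V)

/-- The candidate component of the transported half-braiding. -/
noncomputable def auxB (U : C) : F.obj V ⊗ U ⟶ U ⊗ F.obj V :=
  (F.obj V ◁ (F.asEquivalence.counitIso.app U).inv) ≫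
    μ F V (F.asEquivalence.inverse.obj U) ≫
      F.map (σ.β (F.asEquivalence.inverse.obj U)).hom ≫
        δ F (F.asEquivalence.inverse.obj U) V ≫
          ((F.asEquivalence.counitIso.app U).hom ▷ F.obj V)

instance (U : C) : IsIso (auxB F V σ U) := by
  unfold auxB; dsimp only [Functor.comp_obj, Functor.id_obj, Functor.asEquivalence_functor']; infer_instance

lemma auxB_naturality {U U' : C} (f : U ⟶ U') :
    (F.obj V ◁ f) ≫ auxB F V σ U' = auxB F V σ U ≫ (f ▷ F.obj V) := by
  have h : (F.asEquivalence.counitIso.app U).hom ≫ f =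
      F.map (F.asEquivalence.inverse.map f) ≫ (F.asEquivalence.counitIso.app U').hom :=
    (F.asEquivalence.counitIso.hom.naturality f).symm
  have h'' : (F.asEquivalence.counitIso.app U).inv ≫ F.map (F.asEquivalence.inverse.map f) =
      f ≫ (F.asEquivalence.counitIso.app U').inv := by
    erw [Iso.inv_comp_eq, ← Category.assoc, h, Category.assoc, Iso.hom_inv_id,
      Category.comp_id]
  have h' : (F.obj V ◁ (F.asEquivalence.counitIso.app U).inv) ≫
      (F.obj V ◁ F.map (F.asEquivalence.inverse.map f)) =
      (F.obj V ◁ f) ≫ (F.obj V ◁ (F.asEquivalence.counitIso.app U').inv) := by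
    erw [← MonoidalCategory.whiskerLeft_comp, ← MonoidalCategory.whiskerLeft_comp, h'']; rfl
  simp only [auxB]
  dsimp only [Functor.comp_obj, Functor.id_obj, Functor.asEquivalence_functor'] at h h' ⊢
  rw [← reassoc_of% h']
  simp only [Category.assoc, μ_natural_right_assoc, ← F.map_comp_assoc,
    HalfBraiding.naturality]
  simp only [F.map_comp, Category.assoc]
  rw [← δ_natural_left_assoc]
  rw [← comp_whiskerRight, ← h, comp_whiskerRight]

lemma auxB_key (X : C) :
    auxB F V σ (F.obj X) ≫ μ F X V = μ F V X ≫ F.map (σ.β X).hom := by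
  have hc : (F.asEquivalence.counitIso.app (F.obj X)).hom =
      F.map (F.asEquivalence.unitInv.app X) := F.asEquivalence.counit_app_functor X
  have hci : (F.asEquivalence.counitIso.app (F.obj X)).inv =
      F.map (F.asEquivalence.unit.app X) := by
    apply Iso.inv_ext
    rw [hc]
    exact (F.mapIso (F.asEquivalence.unitIso.app X)).inv_hom_id
  have h3 : F.asEquivalence.unit.app X ≫ F.asEquivalence.unitInv.app X = 𝟙 X :=
    Iso.hom_inv_id_app F.asEquivalence.unitIso X
  obtain ⟨u, ui, hc, hci, h3⟩ : ∃ (u : X ⟶ F.asEquivalence.inverse.obj (F.obj X))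
      (ui : F.asEquivalence.inverse.obj (F.obj X) ⟶ X),
      (F.asEquivalence.counitIso.app (F.obj X)).hom = F.map ui ∧
      (F.asEquivalence.counitIso.app (F.obj X)).inv = F.map u ∧ u ≫ ui = 𝟙 X :=
    ⟨_, _, hc, hci, h3⟩
  simp only [auxB, hc, hci, Category.assoc, Functor.comp_obj, Functor.id_obj]
  dsimp only [Functor.comp_obj, Functor.id_obj, Functor.asEquivalence_functor']
  simp only [Category.assoc]
  rw [μ_natural_left]
  rw [Functor.Monoidal.δ_μ_assoc, μ_natural_right_assoc]
  simp only [← F.map_comp, HalfBraiding.naturality_assoc]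
  rw [← comp_whiskerRight, h3]
  simp

lemma auxB_of_iso {X W : C} (c : F.obj X ≅ W) :
    auxB F V σ W = (F.obj V ◁ c.inv) ≫
      (μ F V X ≫ F.map (σ.β X).hom ≫ δ F X V) ≫ (c.hom ▷ F.obj V) := by
  have h2 : auxB F V σ (F.obj X) = μ F V X ≫ F.map (σ.β X).hom ≫ δ F X V := by
    rw [← cancel_mono (μ F X V), auxB_key]
    simp
  have h := auxB_naturality F V σ c.hom
  rw [h2] at h
  rw [← cancel_epi (F.obj V ◁ c.hom), ← h]
  simp [← MonoidalCategory.whiskerLeft_comp]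

lemma auxB_core (a a' : C) :
    (F.obj V ◁ μ F a a') ≫ μ F V (a ⊗ a') ≫ F.map (σ.β (a ⊗ a')).hom ≫
        δ F (a ⊗ a') V ≫ (δ F a a' ▷ F.obj V) =
      (α_ _ _ _).inv ≫ ((μ F V a ≫ F.map (σ.β a).hom ≫ δ F a V) ▷ F.obj a') ≫
        (α_ _ _ _).hom ≫ (F.obj a ◁ (μ F V a' ≫ F.map (σ.β a').hom ≫ δ F a' V)) ≫
          (α_ _ _ _).inv := by
  have s3 : μ F (a ⊗ V) a' ≫ F.map (α_ a V a').hom =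
      (δ F a V ▷ F.obj a') ≫ (α_ _ _ _).hom ≫ (F.obj a ◁ μ F V a') ≫ μ F a (V ⊗ a') := by
    rw [← Functor.LaxMonoidal.associativity, Functor.Monoidal.whiskerRight_δ_μ_assoc]
  have s4 : μ F a (a' ⊗ V) ≫ F.map (α_ a a' V).inv ≫ δ F (a ⊗ a') V ≫
      (δ F a a' ▷ F.obj V) = (F.obj a ◁ δ F a' V) ≫ (α_ _ _ _).inv := by
    rw [← cancel_mono (α_ (F.obj a) (F.obj a') (F.obj V)).hom]
    simp only [Category.assoc, Functor.OplaxMonoidal.associativity]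
    rw [← F.map_comp_assoc, Iso.inv_hom_id, F.map_id, Category.id_comp,
      Functor.Monoidal.μ_δ_assoc]
    simp
  rw [HalfBraiding.monoidal]
  simp only [F.map_comp, Category.assoc]
  slice_lhs 1 3 => rw [Functor.LaxMonoidal.associativity_inv]
  slice_lhs 3 4 => rw [← Functor.LaxMonoidal.μ_natural_left]
  slice_lhs 4 5 => rw [s3]
  slice_lhs 7 8 => rw [← Functor.LaxMonoidal.μ_natural_right]
  slice_lhs 8 11 => rw [s4]
  simp only [comp_whiskerRight, MonoidalCategory.whiskerLeft_comp, Category.assoc]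

lemma auxB_monoidal (U U' : C) :
    auxB F V σ (U ⊗ U') =
      (α_ _ _ _).inv ≫ (auxB F V σ U ▷ U') ≫ (α_ _ _ _).hom ≫
        (U ◁ auxB F V σ U') ≫ (α_ _ _ _).inv := by
  set a := F.asEquivalence.inverse.obj U with ha
  set a' := F.asEquivalence.inverse.obj U' with ha'
  have c : F.obj a ≅ U := F.asEquivalence.counitIso.app U
  have c' : F.obj a' ≅ U' := F.asEquivalence.counitIso.app U'
  have hφ : auxB F V σ (U ⊗ U') = (F.obj V ◁ ((c.inv ⊗ₘ c'.inv) ≫ μ F a a')) ≫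
      (μ F V (a ⊗ a') ≫ F.map (σ.β (a ⊗ a')).hom ≫ δ F (a ⊗ a') V) ≫
        ((δ F a a' ≫ (c.hom ⊗ₘ c'.hom)) ▷ F.obj V) :=
    auxB_of_iso F V σ ⟨δ F a a' ≫ (c.hom ⊗ₘ c'.hom), (c.inv ⊗ₘ c'.inv) ≫ μ F a a',
      by simp, by simp⟩
  rw [hφ, auxB_of_iso F V σ c, auxB_of_iso F V σ c', conj_hexagon]
  simp only [MonoidalCategory.whiskerLeft_comp, comp_whiskerRight, Category.assoc]
  slice_lhs 2 6 => rw [auxB_core]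
  simp only [comp_whiskerRight, MonoidalCategory.whiskerLeft_comp, Category.assoc]

end aux

open Functor.OplaxMonoidal

/-- A strong monoidal autoequivalence of `C` sends a half-braiding on `V` (i.e. an
object of the Drinfeld center) to a unique half-braiding on `F(V)` compatible with
the tensorator of `F`. -/
theorem exists_unique_halfBraiding_of_monoidal_equivalence
    (F : C ⥤ C) [F.Monoidal] [F.IsEquivalence] (V : C) (σ : HalfBraiding V) :
    ∃! σ' : HalfBraiding (F.obj V), ∀ X : C,
      (σ'.β (F.obj X)).hom ≫ μ F X V = μ F V X ≫ F.map (σ.β X).hom := by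
  refine ⟨{ β := fun U => asIso (auxB F V σ U)
            monoidal := fun U U' => by simpa using auxB_monoidal F V σ U U'
            naturality := fun f => by simpa using auxB_naturality F V σ f },
    fun X => by simpa using auxB_key F V σ X, ?_⟩
  intro τ hτ
  apply HalfBraiding.ext'
  funext U
  apply Iso.ext
  have h1 := τ.naturality (F.asEquivalence.counitIso.app U).hom
  simp only [Functor.comp_obj, Functor.id_obj, Functor.asEquivalence_functor'] at h1
  have h2 : (τ.β (F.obj (F.asEquivalence.inverse.obj U))).hom =
      μ F V (F.asEquivalence.inverse.obj U) ≫
        F.map (σ.β (F.asEquivalence.inverse.obj U)).hom ≫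
          δ F (F.asEquivalence.inverse.obj U) V := by
    rw [← cancel_mono (μ F (F.asEquivalence.inverse.obj U) V),
      hτ (F.asEquivalence.inverse.obj U)]
    simp
  rw [h2] at h1
  show (τ.β U).hom = auxB F V σ U
  rw [← cancel_epi (F.obj V ◁ (F.asEquivalence.counitIso.app U).hom)]
  dsimp only [Functor.comp_obj, Functor.id_obj, Functor.asEquivalence_functor'] at h1 ⊢
  rw [h1]
  simp only [auxB]
  simp [← MonoidalCategory.whiskerLeft_comp_assoc, ← MonoidalCategory.whiskerLeft_comp]
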